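/- arXiv:1008.0686 — 2 statements merged into one kernel-verified Lean document; each statement's English description precedes it below -/
import Mathlib

section
/- Let b : ℕ → R be a sequence in a commutative Q(q)-algebra R and let ∇_q(b)(n) := Σ_{i=0}^{n} q^i ((q^{-n})_i/(q)_i) b(i). Then for all nonnegative integers m and l: Σ_{n=0}^{m} ∇_q(b)(l+n) B_n(q^m) = q^{-lm} Σ_{j=0}^{l} q^j ((q^{-l})_j/(q)_j) b(j+m), where B_n(z) := ∏_{k=1}^{n}(z - q^{k-1})/(1 - q^k). -/
/-- The q-shifted factorial `(x)_i = ∏_{k=0}^{i-1} (1 - x q^k)`. -/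
def qpoch {F : Type*} [Field F] (q x : F) (n : ℕ) : F :=
  ∏ k ∈ Finset.range n, (1 - x * q ^ k)

/-- `B_n(z) = ∏_{k=1}^{n} (z - q^{k-1})/(1 - q^k)`. -/
def Bpoly {F : Type*} [Field F] (q z : F) (n : ℕ) : F :=
  ∏ j ∈ Finset.range n, (z - q ^ j) / (1 - q ^ (j + 1))

/-- `∇_q(b)(n) = Σ_{i=0}^{n} q^i ((q^{-n})_i/(q)_i) b(i)` for a sequence in an algebra. -/
def nablaq {F : Type*} [Field F] {R : Type*} [CommRing R] [Algebra F R]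
    (q : F) (b : ℕ → R) (n : ℕ) : R :=
  ∑ i ∈ Finset.range (n + 1), (q ^ i * qpoch q ((q ^ n)⁻¹) i / qpoch q q i) • b i


section helpers

variable {F : Type*} [Field F] (q : F)

lemma qpoch_succ (x : F) (n : ℕ) : qpoch q x (n+1) = qpoch q x n * (1 - x * q ^ n) := by
  simp [qpoch, Finset.prod_range_succ]

lemma Bpoly_succ (z : F) (n : ℕ) :
    Bpoly q z (n+1) = Bpoly q z n * ((z - q ^ n) / (1 - q ^ (n+1))) := by
  simp [Bpoly, Finset.prod_range_succ]
  rw [div_mul_div_comm]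

lemma qpoch_inv_succ (hq : q ≠ 0) (x : F) (n : ℕ) :
    qpoch q (x * q⁻¹) (n+1) = (1 - x * q⁻¹) * qpoch q x n := by
  rw [qpoch, Finset.prod_range_succ']
  simp only [pow_zero, mul_one]
  rw [mul_comm]
  congr 1
  apply Finset.prod_congr rfl
  intro k _
  congr 1
  rw [mul_assoc, pow_succ']
  field_simp

lemma one_sub_pow_ne (hq1 : ∀ n : ℕ, 1 ≤ n → q ^ n ≠ 1) (k : ℕ) (hk : 1 ≤ k) :
    (1 : F) - q ^ k ≠ 0 := by
  intro h
  exact hq1 k hk (sub_eq_zero.mp h).symm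

lemma Bpoly_self_zero (hq1 : ∀ n : ℕ, 1 ≤ n → q ^ n ≠ 1) (m : ℕ) :
    Bpoly q (q ^ m) (m + 1) = 0 := by
  rw [Bpoly_succ]
  simp

lemma qpoch_inv_zero (hq : q ≠ 0) {N i : ℕ} (h : N < i) :
    qpoch q ((q ^ N)⁻¹) i = 0 := by
  rw [qpoch]
  apply Finset.prod_eq_zero (Finset.mem_range.mpr h)
  rw [inv_mul_cancel₀ (pow_ne_zero _ hq)]
  ring

lemma Bpoly_zero (z : F) : Bpoly q z 0 = 1 := by simp [Bpoly]

lemma Bpoly_pascal (hq1 : ∀ n : ℕ, 1 ≤ n → q ^ n ≠ 1) (m n : ℕ) :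
    Bpoly q (q ^ (m+1)) (n+1) = Bpoly q (q ^ m) (n+1) - q ^ m * Bpoly q (q ^ m) n := by
  induction n with
  | zero =>
    have h1 := one_sub_pow_ne q hq1 1 le_rfl
    rw [Bpoly_succ, Bpoly_succ, Bpoly_zero, Bpoly_zero]
    rw [pow_one] at h1 ⊢
    field_simp
    ring
  | succ n ih =>
    rw [Bpoly_succ q (q^(m+1)) (n+1), ih, Bpoly_succ q (q^m) (n+1), Bpoly_succ q (q^m) n]
    have h1 := one_sub_pow_ne q hq1 (n+1) (by omega)
    have h2 := one_sub_pow_ne q hq1 (n+2) (by omega)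
    field_simp
    ring

lemma key_sum (hq : q ≠ 0) (hq1 : ∀ n : ℕ, 1 ≤ n → q ^ n ≠ 1) (m : ℕ) : ∀ (x : F) (i : ℕ),
    ∑ n ∈ Finset.range (m+1), Bpoly q (q^m) n * qpoch q (x * (q^n)⁻¹) i =
      if m ≤ i then
        x^m * (q^m)⁻¹ * qpoch q x (i-m) * ∏ k ∈ Finset.range m, (1 - q^(i-m+1+k))
      else 0 := by
  induction m with
  | zero =>
    intro x i
    simp [Bpoly_zero]
  | succ m ih =>
    intro x i
    have hrec :
        ∑ n ∈ Finset.range (m+2), Bpoly q (q^(m+1)) n * qpoch q (x * (q^n)⁻¹) i =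
          (∑ n ∈ Finset.range (m+1), Bpoly q (q^m) n * qpoch q (x * (q^n)⁻¹) i)
          - q^m * ∑ n ∈ Finset.range (m+1),
              Bpoly q (q^m) n * qpoch q ((x*q⁻¹) * (q^n)⁻¹) i := by
      rw [Finset.sum_range_succ']
      have hg : ∀ n : ℕ, qpoch q (x * (q^(n+1))⁻¹) i = qpoch q ((x*q⁻¹) * (q^n)⁻¹) i := by
        intro n
        congr 1
        rw [pow_succ, mul_inv]
        ring
      calc (∑ n ∈ Finset.range (m+1), Bpoly q (q^(m+1)) (n+1) * qpoch q (x * (q^(n+1))⁻¹) i)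
            + Bpoly q (q^(m+1)) 0 * qpoch q (x * (q^0)⁻¹) i
          = (∑ n ∈ Finset.range (m+1),
              ((Bpoly q (q^m) (n+1)) * qpoch q (x * (q^(n+1))⁻¹) i
                - q^m * (Bpoly q (q^m) n * qpoch q ((x*q⁻¹) * (q^n)⁻¹) i)))
            + Bpoly q (q^m) 0 * qpoch q (x * (q^0)⁻¹) i := by
            rw [Bpoly_zero, Bpoly_zero]
            congr 1
            apply Finset.sum_congr rfl
            intro n _
            rw [Bpoly_pascal q hq1, hg n]
            ring
        _ = ((∑ n ∈ Finset.range (m+1), Bpoly q (q^m) (n+1) * qpoch q (x * (q^(n+1))⁻¹) i)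
              + Bpoly q (q^m) 0 * qpoch q (x * (q^0)⁻¹) i)
            - q^m * ∑ n ∈ Finset.range (m+1),
                Bpoly q (q^m) n * qpoch q ((x*q⁻¹) * (q^n)⁻¹) i := by
            rw [Finset.sum_sub_distrib, ← Finset.mul_sum]
            ring
        _ = _ := by
            have h5 : (∑ n ∈ Finset.range (m+1),
                  Bpoly q (q^m) (n+1) * qpoch q (x * (q^(n+1))⁻¹) i)
                + Bpoly q (q^m) 0 * qpoch q (x * (q^0)⁻¹) i
                = ∑ n ∈ Finset.range (m+1), Bpoly q (q^m) n * qpoch q (x * (q^n)⁻¹) i := by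
              rw [← Finset.sum_range_succ'
                  (fun n => Bpoly q (q^m) n * qpoch q (x * (q^n)⁻¹) i) (m+1)]
              rw [Finset.sum_range_succ, Bpoly_self_zero q hq1, zero_mul, add_zero]
            rw [h5]
    rw [hrec, ih x i, ih (x*q⁻¹) i]
    have hqm : (q:F)^m ≠ 0 := pow_ne_zero _ hq
    have hqm1 : (q:F)^(m+1) ≠ 0 := pow_ne_zero _ hq
    rcases lt_trichotomy i m with hi | hi | hi
    · rw [if_neg (by omega), if_neg (by omega), if_neg (by omega)]
      ring
    · subst hi
      rw [if_pos le_rfl, if_pos le_rfl, if_neg (by omega)]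
      simp only [Nat.sub_self, qpoch]
      simp only [Finset.range_zero, Finset.prod_empty]
      rw [mul_pow, inv_pow]
      field_simp
      ring
    · have h1 : m ≤ i := by omega
      have h2 : m + 1 ≤ i := by omega
      obtain ⟨d, rfl⟩ : ∃ d, i = m + 1 + d := ⟨i - (m+1), by omega⟩
      rw [if_pos h1, if_pos h1, if_pos h2]
      have e1 : m + 1 + d - m = d + 1 := by omega
      have e2 : m + 1 + d - (m + 1) = d := by omega
      rw [e1, e2]
      rw [qpoch_succ, qpoch_inv_succ q hq]
      have e3 : ∏ k ∈ Finset.range (m+1), (1 - q^(d+1+k))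
          = (1 - q^(d+1)) * ∏ k ∈ Finset.range m, (1 - q^(d+1+1+k)) := by
        rw [Finset.prod_range_succ']
        rw [add_zero, mul_comm]
        congr 1
        apply Finset.prod_congr rfl
        intro k _
        congr 2
        omega
      rw [e3]
      rw [mul_pow, inv_pow]
      field_simp
      ring

lemma qpoch_q_split (j m : ℕ) :
    qpoch q q (j + m) = qpoch q q j * ∏ k ∈ Finset.range m, (1 - q ^ (j + 1 + k)) := by
  rw [qpoch, Finset.prod_range_add]
  congr 1
  apply Finset.prod_congr rfl
  intro k _
  congr 1
  rw [← pow_succ']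
  congr 1
  omega

end helpers

theorem stmt_7 {F : Type*} [Field F] {R : Type*} [CommRing R] [Algebra F R]
    (q : F) (hq : q ≠ 0) (hq1 : ∀ n : ℕ, 1 ≤ n → q ^ n ≠ 1) (b : ℕ → R) (m l : ℕ) :
    ∑ n ∈ Finset.range (m + 1), Bpoly q (q ^ m) n • nablaq q b (l + n) =
      (q ^ (l * m))⁻¹ •
        ∑ j ∈ Finset.range (l + 1),
          (q ^ j * qpoch q ((q ^ l)⁻¹) j / qpoch q q j) • b (j + m) := by
  have hprod_ne : ∀ (a n : ℕ), (∏ k ∈ Finset.range n, (1 - q ^ (a + 1 + k))) ≠ 0 := by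
    intro a n
    apply Finset.prod_ne_zero_iff.mpr
    intro k _
    exact one_sub_pow_ne q hq1 (a + 1 + k) (by omega)
  have hqq : ∀ i, qpoch q q i ≠ 0 := by
    intro i
    apply Finset.prod_ne_zero_iff.mpr
    intro k _
    have := one_sub_pow_ne q hq1 (k + 1) (by omega)
    rwa [pow_succ'] at this
  calc ∑ n ∈ Finset.range (m + 1), Bpoly q (q ^ m) n • nablaq q b (l + n)
      = ∑ n ∈ Finset.range (m + 1), ∑ i ∈ Finset.range (l + m + 1),
          (Bpoly q (q ^ m) n * (q ^ i * qpoch q ((q ^ (l + n))⁻¹) i / qpoch q q i)) • b i := by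
        apply Finset.sum_congr rfl
        intro n hn
        have hn' : n ≤ m := by simpa [Nat.lt_succ_iff] using hn
        have hsub : Finset.range (l + n + 1) ⊆ Finset.range (l + m + 1) :=
          Finset.range_subset_range.mpr (by omega)
        have hz : ∀ i ∈ Finset.range (l + m + 1), i ∉ Finset.range (l + n + 1) →
            (q ^ i * qpoch q ((q ^ (l + n))⁻¹) i / qpoch q q i) • b i = 0 := by
          intro i h1 h2
          simp only [Finset.mem_range] at h1 h2
          rw [qpoch_inv_zero q hq (by omega)]
          simp
        rw [nablaq, Finset.sum_subset hsub hz, Finset.smul_sum]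
        exact Finset.sum_congr rfl (fun i _ => smul_smul _ _ _)
    _ = ∑ i ∈ Finset.range (l + m + 1),
          (∑ n ∈ Finset.range (m + 1),
            Bpoly q (q ^ m) n * (q ^ i * qpoch q ((q ^ (l + n))⁻¹) i / qpoch q q i)) • b i := by
        rw [Finset.sum_comm]
        exact Finset.sum_congr rfl (fun i _ => (Finset.sum_smul).symm)
    _ = ∑ i ∈ Finset.range (l + m + 1),
          ((q ^ i / qpoch q q i) *
            if m ≤ i then
              ((q^l)⁻¹)^m * (q^m)⁻¹ * qpoch q ((q^l)⁻¹) (i-m) *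
                ∏ k ∈ Finset.range m, (1 - q^(i-m+1+k))
            else 0) • b i := by
        apply Finset.sum_congr rfl
        intro i _
        congr 1
        rw [← key_sum q hq hq1 m ((q^l)⁻¹) i, Finset.mul_sum]
        apply Finset.sum_congr rfl
        intro n _
        rw [pow_add, mul_inv]
        ring
    _ = ∑ j ∈ Finset.range (l + 1),
          ((q ^ (m + j) / qpoch q q (m + j)) *
            (((q^l)⁻¹)^m * (q^m)⁻¹ * qpoch q ((q^l)⁻¹) j *
              ∏ k ∈ Finset.range m, (1 - q^(j+1+k)))) • b (m + j) := by
        have hre : l + m + 1 = m + (l + 1) := by omega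
        rw [hre, Finset.sum_range_add]
        have h0 : ∀ i ∈ Finset.range m,
            ((q ^ i / qpoch q q i) *
              if m ≤ i then
                ((q^l)⁻¹)^m * (q^m)⁻¹ * qpoch q ((q^l)⁻¹) (i-m) *
                  ∏ k ∈ Finset.range m, (1 - q^(i-m+1+k))
              else 0) • b i = 0 := by
          intro i hi
          simp only [Finset.mem_range] at hi
          rw [if_neg (by omega)]
          simp
        rw [Finset.sum_eq_zero h0, zero_add]
        apply Finset.sum_congr rfl
        intro j _
        rw [if_pos (by omega)]
        have e : m + j - m = j := by omega
        rw [e]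
    _ = (q ^ (l * m))⁻¹ •
        ∑ j ∈ Finset.range (l + 1),
          (q ^ j * qpoch q ((q ^ l)⁻¹) j / qpoch q q j) • b (j + m) := by
        rw [Finset.smul_sum]
        apply Finset.sum_congr rfl
        intro j _
        rw [smul_smul, Nat.add_comm m j]
        congr 1
        rw [qpoch_q_split q j m, inv_pow, ← pow_mul]
        have h1 := hqq j
        have h2 := hprod_ne j m
        have h3 : (q : F) ^ (l * m) ≠ 0 := pow_ne_zero _ hq
        have h4 : (q : F) ^ m ≠ 0 := pow_ne_zero _ hq
        field_simp
        ring
end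

section
/- With B_n(z) := ∏_{j=1}^{n}(z - q^{j-1})/(1 - q^j), for every n ≥ 1 one has B_n(z) = Σ_{m=1}^{n} a_m(n-1) ((z-1)/(1-q))^m, where a_m(n-1) := Σ_{n = m_1 > m_2 > ⋯ > m_m > 0} 1/([m_1]⋯[m_m]) with [k] := (1-q^k)/(1-q) the q-integer (i.e., a_m(n-1) is the sum over strictly decreasing chains of length m starting at m_1 = n of products of reciprocal q-integers). -/
/-- The q-integer `[k] = (1-q^k)/(1-q)`. -/
def qint {F : Type*} [Field F] (q : F) (k : ℕ) : F :=
  (1 - q ^ k) / (1 - q)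

noncomputable def Achain {F : Type*} [Field F] (q : F) : ℕ → ℕ → F
  | 0, n => (qint q n)⁻¹
  | (m+1), n => (qint q n)⁻¹ * ∑ k ∈ Finset.range n, Achain q m k

noncomputable def Ssum {F : Type*} [Field F] (q : F) (m n : ℕ) : F :=
  ∑ c ∈ Finset.univ.filter
      (fun c : Fin (m + 1) → Fin (n + 1) =>
        (∀ i j : Fin (m + 1), i < j → c j < c i) ∧
        ((c 0 : ℕ) = n) ∧ ∀ i, 1 ≤ (c i : ℕ)),
    ∏ i, (qint q (c i : ℕ))⁻¹

section
variable {F : Type*} [Field F] (q : F)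

lemma qint_zero : qint q 0 = 0 := by simp [qint]

lemma Achain_zero_of_le : ∀ m n : ℕ, n ≤ m → Achain q m n = 0 := by
  intro m
  induction m with
  | zero => intro n hn; interval_cases n; simp [Achain, qint_zero]
  | succ m ih =>
    intro n hn
    rw [Achain]
    rw [Finset.sum_eq_zero, mul_zero]
    intro k hk
    simp only [Finset.mem_range] at hk
    exact ih k (by omega)

lemma Ssum_zero_right (m : ℕ) : Ssum q m 0 = 0 := by
  rw [Ssum, Finset.sum_eq_zero]
  intro c hc
  simp only [Finset.mem_filter] at hc
  have h1 := hc.2.2.2 0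
  have h2 := (c 0).isLt
  omega

lemma sigma_fun_ext {m a b : ℕ} (f : Fin (m+1) → Fin (a+1)) (g : Fin (m+1) → Fin (b+1))
    (h : a = b) (h2 : ∀ i, (f i : ℕ) = (g i : ℕ)) :
    (⟨a, f⟩ : Σ k : ℕ, Fin (m+1) → Fin (k+1)) = ⟨b, g⟩ := by
  subst h
  have hfg : f = g := funext fun i => Fin.ext (h2 i)
  rw [hfg]

lemma key_le {m n : ℕ} {c : Fin (m+2) → Fin (n+1)}
    (hanti : ∀ i j : Fin (m+2), i < j → c j < c i) (j : Fin (m+1)) :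
    (c j.succ : ℕ) ≤ (c 1 : ℕ) := by
  rcases Nat.eq_zero_or_pos j.val with hj | hj
  · have hj1 : j.succ = 1 := Fin.ext (by simp [hj])
    rw [hj1]
  · have hlt : (1 : Fin (m+2)) < j.succ := by
      rw [Fin.lt_iff_val_lt_val]
      simp only [Fin.val_one, Fin.val_succ]
      omega
    exact le_of_lt (hanti 1 j.succ hlt)

lemma key_le' {m k : ℕ} {c : Fin (m+1) → Fin (k+1)}
    (hanti : ∀ i j : Fin (m+1), i < j → c j < c i) (h0 : (c 0 : ℕ) = k) (j : Fin (m+1)) :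
    (c j : ℕ) ≤ k := by
  rcases Nat.eq_zero_or_pos j.val with hj | hj
  · have : j = 0 := Fin.ext (by simp [hj])
    rw [this, h0]
  · have hlt : (0 : Fin (m+1)) < j := by
      rw [Fin.lt_iff_val_lt_val]; simpa using hj
    have := Fin.lt_iff_val_lt_val.mp (hanti 0 j hlt)
    omega

def chainSet (m n : ℕ) : Finset (Fin (m + 1) → Fin (n + 1)) :=
  Finset.univ.filter
    (fun c : Fin (m + 1) → Fin (n + 1) =>
      (∀ i j : Fin (m + 1), i < j → c j < c i) ∧
      ((c 0 : ℕ) = n) ∧ ∀ i, 1 ≤ (c i : ℕ))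

lemma mem_chainSet {m n : ℕ} {c : Fin (m + 1) → Fin (n + 1)} (hc : c ∈ chainSet m n) :
    (∀ i j : Fin (m + 1), i < j → c j < c i) ∧ ((c 0 : ℕ) = n) ∧ ∀ i, 1 ≤ (c i : ℕ) :=
  (Finset.mem_filter.mp hc).2

lemma Ssum_eq_chainSet (m n : ℕ) : Ssum q m n = ∑ c ∈ chainSet m n, ∏ i, (qint q (c i : ℕ))⁻¹ :=
  rfl

lemma fwd_bound {m n : ℕ} {c : Fin (m+2) → Fin (n+1)} (hc : c ∈ chainSet (m+1) n)
    (j : Fin (m+1)) : (c j.succ : ℕ) < (c 1 : ℕ) + 1 :=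
  Nat.lt_succ_of_le (key_le (mem_chainSet hc).1 j)

lemma bwd_bound {m n : ℕ} {p : Σ k : ℕ, Fin (m+1) → Fin (k+1)}
    (hp : p ∈ (Finset.range n).sigma (fun k => chainSet m k)) (j : Fin (m+1)) :
    (p.2 j : ℕ) < n + 1 := by
  obtain ⟨hk', hc'⟩ := Finset.mem_sigma.mp hp
  have hk := Finset.mem_range.mp hk'
  obtain ⟨hanti, h0, h1⟩ := mem_chainSet hc'
  have := key_le' hanti h0 j
  omega

lemma Ssum_succ (m n : ℕ) : Ssum q (m+1) n = (qint q n)⁻¹ * ∑ k ∈ Finset.range n, Ssum q m k := by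
  rcases Nat.eq_zero_or_pos n with rfl | hn
  · simp [Ssum_zero_right]
  simp only [Ssum_eq_chainSet, Finset.mul_sum]
  rw [Finset.sum_sigma']
  refine Finset.sum_bij'
    (fun (c : Fin (m+2) → Fin (n+1)) hc =>
      (⟨(c 1 : ℕ), fun j => ⟨(c j.succ : ℕ), fwd_bound hc j⟩⟩ :
        Σ k : ℕ, Fin (m+1) → Fin (k+1)))
    (fun p hp =>
      Fin.cons (Fin.last n) (fun j => ⟨(p.2 j : ℕ), bwd_bound hp j⟩))
    ?_ ?_ ?_ ?_ ?_
  · -- forward membership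
    intro c hc
    obtain ⟨hanti, h0, h1⟩ := mem_chainSet hc
    rw [Finset.mem_sigma]
    constructor
    · rw [Finset.mem_range]
      show (c 1 : ℕ) < n
      have h01 := hanti 0 1 (by rw [Fin.lt_iff_val_lt_val]; simp)
      rw [Fin.lt_iff_val_lt_val] at h01
      omega
    · refine Finset.mem_filter.mpr ⟨Finset.mem_univ _, ?_, ?_, ?_⟩
      · intro i j hij
        rw [Fin.lt_iff_val_lt_val]
        have := hanti i.succ j.succ (by
          rw [Fin.lt_iff_val_lt_val]
          simp only [Fin.val_succ]
          exact Nat.add_lt_add_right (Fin.lt_iff_val_lt_val.mp hij) 1)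
        exact Fin.lt_iff_val_lt_val.mp this
      · show ((c (0 : Fin (m+1)).succ : ℕ)) = (c 1 : ℕ)
        have h00 : (0 : Fin (m+1)).succ = 1 := Fin.ext (by simp)
        rw [h00]
      · intro i
        exact h1 i.succ
  · -- backward membership
    intro p hp
    obtain ⟨hk', hc'⟩ := Finset.mem_sigma.mp hp
    have hk := Finset.mem_range.mp hk'
    obtain ⟨hanti, h0, h1⟩ := mem_chainSet hc'
    have key := key_le' hanti h0
    beta_reduce
    refine Finset.mem_filter.mpr ⟨Finset.mem_univ _, ?_, ?_, ?_⟩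
    · intro i j hij
      rcases Fin.eq_zero_or_eq_succ j with rfl | ⟨j', rfl⟩
      · exact absurd hij (by simp [Fin.lt_iff_val_lt_val])
      rcases Fin.eq_zero_or_eq_succ i with rfl | ⟨i', rfl⟩
      · rw [Fin.cons_zero, Fin.cons_succ, Fin.lt_iff_val_lt_val]
        have := key j'
        simp only [Fin.val_last]
        omega
      · rw [Fin.cons_succ, Fin.cons_succ, Fin.lt_iff_val_lt_val]
        have hij' : i' < j' := by
          rw [Fin.lt_iff_val_lt_val] at hij ⊢
          simp only [Fin.val_succ] at hij
          omega
        exact Fin.lt_iff_val_lt_val.mp (hanti i' j' hij')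
    · rw [Fin.cons_zero]
      simp
    · intro i
      rcases Fin.eq_zero_or_eq_succ i with rfl | ⟨i', rfl⟩
      · rw [Fin.cons_zero]
        simp only [Fin.val_last]; omega
      · rw [Fin.cons_succ]
        exact h1 i'
  · -- left inverse
    intro c hc
    obtain ⟨hanti, h0, h1⟩ := mem_chainSet hc
    beta_reduce
    funext i
    rcases Fin.eq_zero_or_eq_succ i with rfl | ⟨i', rfl⟩
    · rw [Fin.cons_zero]
      exact Fin.ext (by simp [Fin.val_last, h0])
    · rw [Fin.cons_succ]
  · -- right inverse
    intro p hp
    obtain ⟨hk', hc'⟩ := Finset.mem_sigma.mp hp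
    have hk := Finset.mem_range.mp hk'
    obtain ⟨hanti, h0, h1⟩ := mem_chainSet hc'
    have hone : (1 : Fin (m+2)) = (0 : Fin (m+1)).succ := Fin.ext (by simp)
    obtain ⟨k, c'⟩ := p
    refine sigma_fun_ext _ _ ?_ ?_
    · show ((Fin.cons (Fin.last n) _ : Fin (m+2) → Fin (n+1)) 1 : ℕ) = k
      rw [hone, Fin.cons_succ]
      exact h0
    · intro i
      show ((Fin.cons (Fin.last n) _ : Fin (m+2) → Fin (n+1)) i.succ : ℕ) = (c' i : ℕ)
      rw [Fin.cons_succ]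
  · -- value equality
    intro c hc
    obtain ⟨hanti, h0, h1⟩ := mem_chainSet hc
    rw [Fin.prod_univ_succ]
    congr 1
    rw [h0]

lemma Ssum_eq_Achain (m n : ℕ) : Ssum q m n = Achain q m n := by
  induction m generalizing n with
  | zero =>
    rcases Nat.eq_zero_or_pos n with h | h
    · subst h
      rw [Ssum_zero_right, Achain]
      simp [qint_zero]
    · rw [Ssum, Achain]
      have hfil : (Finset.univ.filter
          (fun c : Fin 1 → Fin (n + 1) =>
            (∀ i j : Fin 1, i < j → c j < c i) ∧
            ((c 0 : ℕ) = n) ∧ ∀ i, 1 ≤ (c i : ℕ)))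
          = {fun _ => Fin.last n} := by
        ext c
        simp only [Finset.mem_filter, Finset.mem_univ, true_and, Finset.mem_singleton]
        constructor
        · rintro ⟨-, h0, -⟩
          funext i
          have hi : i = 0 := Subsingleton.elim _ _
          subst hi
          exact Fin.ext (by simpa [Fin.last] using h0)
        · rintro rfl
          refine ⟨fun i j hij => ?_, by simp [Fin.last], fun i => by simp [Fin.last]; omega⟩
          exact absurd (Fin.lt_iff_val_lt_val.mp hij) (by omega)
      rw [hfil, Finset.sum_singleton]
      simp [Fin.last]
  | succ m ih =>
    rw [Ssum_succ, Achain]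
    congr 1
    exact Finset.sum_congr rfl fun k _ => ih k


lemma one_sub_q_ne (hq1 : ∀ k : ℕ, 1 ≤ k → q ^ k ≠ 1) : (1 : F) - q ≠ 0 := by
  intro h
  exact hq1 1 le_rfl (by rw [pow_one]; exact (sub_eq_zero.mp h).symm)

lemma one_sub_qpow_ne (hq1 : ∀ k : ℕ, 1 ≤ k → q ^ k ≠ 1) {k : ℕ} (hk : 1 ≤ k) :
    (1 : F) - q ^ k ≠ 0 := by
  intro h
  exact hq1 k hk (sub_eq_zero.mp h).symm

lemma qint_ne_zero (hq1 : ∀ k : ℕ, 1 ≤ k → q ^ k ≠ 1) {k : ℕ} (hk : 1 ≤ k) :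
    qint q k ≠ 0 :=
  div_ne_zero (one_sub_qpow_ne q hq1 hk) (one_sub_q_ne q hq1)

lemma Bkey (z : F) (hq1 : ∀ k : ℕ, 1 ≤ k → q ^ k ≠ 1) :
    ∀ n : ℕ, 1 ≤ n →
      Bpoly q z n = ∑ m ∈ Finset.range n, Achain q m n * ((z - 1) / (1 - q)) ^ (m + 1) := by
  have hq' : (1 : F) - q ≠ 0 := one_sub_q_ne q hq1
  intro n
  induction n with
  | zero => omega
  | succ n ih =>
    intro _
    rcases Nat.eq_zero_or_pos n with rfl | hn
    · -- base case n+1 = 1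
      rw [Bpoly, Finset.prod_range_one, Finset.sum_range_one]
      have h1 : qint q 1 = 1 := by
        rw [qint, pow_one, div_self hq']
      rw [Achain, h1, inv_one, one_mul, pow_one, pow_zero, pow_one]
    · -- inductive step
      have ihn := ih hn
      set x := (z - 1) / (1 - q) with hx
      have ha : qint q n ≠ 0 := qint_ne_zero q hq1 hn
      have hb : qint q (n + 1) ≠ 0 := qint_ne_zero q hq1 (by omega)
      set a := qint q n with hadef
      set b := qint q (n + 1) with hbdef
      set S := ∑ m ∈ Finset.range n, Achain q m n * x ^ (m + 1) with hS
      have hsum : ∀ m : ℕ, Achain q (m + 1) (n + 1)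
          = b⁻¹ * (a * Achain q (m + 1) n + Achain q m n) := by
        intro m
        rw [Achain, Finset.sum_range_succ]
        congr 1
        have : Achain q (m + 1) n = a⁻¹ * ∑ k ∈ Finset.range n, Achain q m k := by
          rw [Achain]
        rw [this]
        field_simp
      have hshift : ∑ m ∈ Finset.range n, Achain q (m + 1) n * x ^ (m + 2)
          = S - Achain q 0 n * x := by
        have h1 := Finset.sum_range_succ' (fun m => Achain q m n * x ^ (m + 1)) n
        have h2 := Finset.sum_range_succ (fun m => Achain q m n * x ^ (m + 1)) n
        simp only [Achain_zero_of_le q n n le_rfl, zero_mul, add_zero] at h2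
        rw [h2] at h1
        rw [← hS] at h1
        have : ∑ m ∈ Finset.range n, Achain q (m + 1) n * x ^ (m + 2)
            = ∑ m ∈ Finset.range n, Achain q (m + 1) n * x ^ (m + 1 + 1) := by norm_num
        rw [pow_one] at h1
        rw [this, h1]
        ring
      have hfrac : (z - q ^ n) / (1 - q ^ (n + 1)) = (x + a) / b := by
        rw [hx, hadef, hbdef, qint, qint]
        have h2 : (1 : F) - q ^ (n + 1) ≠ 0 := one_sub_qpow_ne q hq1 (by omega)
        field_simp
        ring
      have hA0n : Achain q 0 n = a⁻¹ := by rw [Achain]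
      have hA0n1 : Achain q 0 (n + 1) = b⁻¹ := by rw [Achain]
      rw [Bpoly, Finset.prod_range_succ, ← Bpoly, ihn, hfrac]
      rw [Finset.sum_range_succ']
      have hterm : ∀ m ∈ Finset.range n, Achain q (m + 1) (n + 1) * x ^ (m + 1 + 1)
          = b⁻¹ * a * (Achain q (m + 1) n * x ^ (m + 2)) + b⁻¹ * (Achain q m n * x ^ (m + 1) * x) := by
        intro m _
        rw [hsum m]
        ring
      rw [Finset.sum_congr rfl hterm, Finset.sum_add_distrib, ← Finset.mul_sum, ← Finset.mul_sum,
        hshift, hA0n1, hA0n]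
      have : ∑ m ∈ Finset.range n, Achain q m n * x ^ (m + 1) * x = S * x := by
        rw [hS, Finset.sum_mul]
      rw [this]
      field_simp
      ring

end

/-- For `n ≥ 1`, `B_n(z) = Σ_{m=1}^{n} a_m(n-1) ((z-1)/(1-q))^m` where
`a_m(n-1)` is the sum over strictly decreasing chains `n = m₁ > m₂ > ⋯ > m_m ≥ 1`
of `∏ 1/[m_i]`.  Chains of length `m+1` (so lengths `1,…,n`) are encoded as
strictly antitone functions `c : Fin (m+1) → Fin (n+1)` with `c 0 = n` and all
values at least `1`. -/
theorem stmt_9 {F : Type*} [Field F] (q z : F) (hq : q ≠ 0)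
    (hq1 : ∀ n : ℕ, 1 ≤ n → q ^ n ≠ 1) (n : ℕ) (hn : 1 ≤ n) :
    Bpoly q z n =
      ∑ m ∈ Finset.range n,
        (∑ c ∈ Finset.univ.filter
            (fun c : Fin (m + 1) → Fin (n + 1) =>
              (∀ i j : Fin (m + 1), i < j → c j < c i) ∧
              ((c 0 : ℕ) = n) ∧ ∀ i, 1 ≤ (c i : ℕ)),
          ∏ i, (qint q (c i : ℕ))⁻¹) * ((z - 1) / (1 - q)) ^ (m + 1) := by
  rw [Bkey q z hq1 n hn]
  refine Finset.sum_congr rfl fun m _ => ?_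
  congr 1
  exact (Ssum_eq_Achain q m n).symm
end
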